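/- Let 𝔼 = (E_1,…,E_n) be a full, strong exceptional collection with dual collection 𝔽 = (F_n,…,F_1), and suppose φ: 𝔼 → Z is a levelling that is tilting at level m. Then any two distinct objects E_i, E_j with φ(E_i) = φ(E_j) = m are orthogonal (Hom^•(E_i,E_j) = 0 = Hom^•(E_j,E_i)), and moreover the dual objects F_i and F_j are orthogonal. -/

import Mathlib

open CategoryTheory Limits Pretriangulated

universe v u

variable (C : Type u) [Category.{v} C] [Preadditive C] [HasZeroObject C]
  [HasShift C ℤ] [∀ n : ℤ, (CategoryTheory.shiftFunctor C n).Additive] [Pretriangulated C]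
  [CategoryTheory.Linear ℂ C]

/-- All graded morphisms from `X` to `Y` vanish. -/
def NoHoms (X Y : C) : Prop := ∀ n : ℤ, ∀ f : X ⟶ Y⟦n⟧, f = 0

/-- The category `C` is of finite type: total graded Hom spaces are finite dimensional. -/
def FiniteType : Prop :=
  ∀ X Y : C, (∀ n : ℤ, FiniteDimensional ℂ (X ⟶ Y⟦n⟧)) ∧
    {n : ℤ | ∃ f : X ⟶ Y⟦n⟧, f ≠ 0}.Finite

/-- An exceptional object: `Hom^•(E,E) = ℂ`, concentrated in degree `0`. -/
def IsExceptional (E : C) : Prop :=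
  (∀ n : ℤ, n ≠ 0 → ∀ f : E ⟶ E⟦n⟧, f = 0) ∧ Module.finrank ℂ (E ⟶ E) = 1

/-- Membership in the smallest strictly full triangulated subcategory containing `S`. -/
inductive genTriang (S : Set C) : C → Prop
  | of (X : C) (hX : X ∈ S) : genTriang S X
  | isZero (X : C) (hX : IsZero X) : genTriang S X
  | iso {X Y : C} (e : X ≅ Y) (hX : genTriang S X) : genTriang S Y
  | shift (X : C) (n : ℤ) (hX : genTriang S X) : genTriang S (X⟦n⟧)
  | ext₂ (T : Triangle C) (hT : T ∈ distTriang C) (h₁ : genTriang S T.obj₁)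
      (h₃ : genTriang S T.obj₃) : genTriang S T.obj₂

/-- The left orthogonal `^⊥S`. -/
def leftOrth (S : Set C) : Set C := {X | ∀ Y ∈ S, NoHoms C X Y}

/-- The right orthogonal `S^⊥`. -/
def rightOrth (S : Set C) : Set C := {X | ∀ Y ∈ S, NoHoms C Y X}

/-- `Y` is the left mutation of `X` through (the subcategory generated by) `S`. -/
def IsLeftMutation (S : Set C) (X Y : C) : Prop :=
  X ∈ leftOrth C S ∧ Y ∈ rightOrth C S ∧
    ∃ (A : C) (f : A ⟶ X) (g : X ⟶ Y) (h : Y ⟶ A⟦(1:ℤ)⟧),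
      genTriang C S A ∧ Triangle.mk f g h ∈ distTriang C

/-- `X` is the right mutation of `Y` through (the subcategory generated by) `S`. -/
def IsRightMutation (S : Set C) (X Y : C) : Prop :=
  X ∈ leftOrth C S ∧ Y ∈ rightOrth C S ∧
    ∃ (A : C) (f : X ⟶ Y) (g : Y ⟶ A) (h : A ⟶ X⟦(1:ℤ)⟧),
      genTriang C S A ∧ Triangle.mk f g h ∈ distTriang C

/-- `IterLeftMut l X Y` : `Y ≅ L_{E₁} ⋯ L_{E_k} (X)` where `l = [E₁, …, E_k]`. -/
def IterLeftMut : List C → C → C → Prop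
  | [], X, Y => Nonempty (X ≅ Y)
  | (E :: t), X, Y => ∃ Z, IterLeftMut t X Z ∧ IsLeftMutation C {E} Z Y

/-- `IterRightMut l Y X` : `X ≅ R_{E_k} ⋯ R_{E₁} (Y)` where `l = [E₁, …, E_k]`. -/
def IterRightMut : List C → C → C → Prop
  | [], Y, X => Nonempty (Y ≅ X)
  | (E :: t), Y, X => ∃ Z, IsRightMutation C {E} Z Y ∧ IterRightMut t Z X

/-- `E 0, …, E (n-1)` is an exceptional collection. -/
def ExcCollection (n : ℕ) (E : ℕ → C) : Prop :=
  (∀ i < n, IsExceptional C (E i)) ∧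
    ∀ i j, i < j → j < n → NoHoms C (E j) (E i)

/-- The set of objects of the collection `E 0, …, E (n-1)`. -/
def collSet (n : ℕ) (E : ℕ → C) : Set C := {X | ∃ i < n, X = E i}


/-- For `i ≤ j`, the objects at positions `i` and `j` are `p`-related (with respect to the
dual collection `F`): `Hom^k(F j, F i) = 0` for `k ≠ p`. -/
def PRelated (F : ℕ → C) (i j : ℕ) (p : ℤ) : Prop :=
  ∀ k : ℤ, k ≠ p → ∀ f : F j ⟶ (F i)⟦k⟧, f = 0

/-! ### Auxiliary lemmas -/

set_option linter.unusedSectionVars false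

section Aux

variable {D : Type u} [Category.{v} D] [Preadditive D] [HasZeroObject D]
  [HasShift D ℤ] [∀ n : ℤ, (CategoryTheory.shiftFunctor D n).Additive] [Pretriangulated D]
  [CategoryTheory.Linear ℂ D]

/-- Transfer a degree-0 statement out of the shift. -/
lemma van_zero_of {X Y : D} (h : ∀ f : X ⟶ Y, f = 0) : ∀ f : X ⟶ Y⟦(0 : ℤ)⟧, f = 0 := by
  intro f
  have h2 := h (f ≫ (shiftFunctorZero D ℤ).hom.app Y)
  have : f = (f ≫ (shiftFunctorZero D ℤ).hom.app Y) ≫ (shiftFunctorZero D ℤ).inv.app Y := by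
    simp
  rw [this, h2, zero_comp]

lemma noHoms_hom_zero {X Y : D} (h : NoHoms D X Y) : ∀ f : X ⟶ Y, f = 0 := by
  intro f
  have h2 := h 0 (f ≫ (shiftFunctorZero D ℤ).inv.app Y)
  have : f = (f ≫ (shiftFunctorZero D ℤ).inv.app Y) ≫ (shiftFunctorZero D ℤ).hom.app Y := by
    simp
  rw [this, h2, zero_comp]

lemma noHoms_mk {X Y : D} (h0 : ∀ f : X ⟶ Y, f = 0)
    (h : ∀ k : ℤ, k ≠ 0 → ∀ f : X ⟶ Y⟦k⟧, f = 0) : NoHoms D X Y := by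
  intro k f
  by_cases hk : k = 0
  · subst hk; exact van_zero_of h0 f
  · exact h k hk f

lemma van_iso_src {X X' W : D} (e : X ≅ X') (h : ∀ f : X ⟶ W, f = 0) :
    ∀ f : X' ⟶ W, f = 0 := by
  intro f
  have h2 := h (e.hom ≫ f)
  have : f = e.inv ≫ e.hom ≫ f := by simp
  rw [this, h2, comp_zero]

lemma van_iso_tgt {X W W' : D} (e : W ≅ W') (h : ∀ f : X ⟶ W, f = 0) :
    ∀ f : X ⟶ W', f = 0 := by
  intro f
  have h2 := h (f ≫ e.inv)
  have : f = (f ≫ e.inv) ≫ e.hom := by simp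
  rw [this, h2, zero_comp]

lemma noHoms_iso_src {X X' W : D} (e : X ≅ X') (h : NoHoms D X W) : NoHoms D X' W :=
  fun k => van_iso_src e (h k)

lemma noHoms_iso_tgt {X W W' : D} (e : W ≅ W') (h : NoHoms D X W) : NoHoms D X W' :=
  fun k => van_iso_tgt ((shiftFunctor D k).mapIso e) (h k)

lemma noHoms_shift_tgt {X W : D} (h : NoHoms D X W) (s : ℤ) : NoHoms D X (W⟦s⟧) := by
  intro k f
  have h2 := h (s + k) (f ≫ ((shiftFunctorAdd D s k).app W).inv)
  have : f = (f ≫ ((shiftFunctorAdd D s k).app W).inv) ≫ ((shiftFunctorAdd D s k).app W).hom := by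
    simp
  rw [this, h2, zero_comp]

lemma van_shift_tgt_add {X Y : D} (a k : ℤ) (h : ∀ g : X ⟶ Y⟦a + k⟧, g = 0) :
    ∀ f : X ⟶ (Y⟦a⟧)⟦k⟧, f = 0 := by
  intro f
  have h2 := h (f ≫ ((shiftFunctorAdd D a k).app Y).inv)
  have : f = (f ≫ ((shiftFunctorAdd D a k).app Y).inv) ≫ ((shiftFunctorAdd D a k).app Y).hom := by
    simp
  rw [this, h2, zero_comp]

lemma van_shift_cancel {X W : D} (s t : ℤ) (hst : s + t = 0)
    (h : ∀ g : X ⟶ W⟦t⟧, g = 0) : ∀ f : X⟦s⟧ ⟶ W, f = 0 := by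
  intro f
  have h1 : (shiftFunctorCompIsoId D s t hst).inv.app X ≫ (shiftFunctor D t).map f = 0 := h _
  have h2 : (shiftFunctor D t).map f =
      (shiftFunctorCompIsoId D s t hst).hom.app X ≫
        ((shiftFunctorCompIsoId D s t hst).inv.app X ≫ (shiftFunctor D t).map f) := by
    simp
  rw [h1, comp_zero] at h2
  exact (shiftFunctor D t).map_injective (by rw [h2, Functor.map_zero])

lemma noHoms_shift_src {X W : D} (h : NoHoms D X W) (s : ℤ) : NoHoms D (X⟦s⟧) W := by
  intro k
  refine van_shift_cancel s (-s) (add_neg_cancel s) ?_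
  intro g
  have h2 := h (k + -s) (g ≫ ((shiftFunctorAdd D k (-s)).app W).inv)
  have : g = (g ≫ ((shiftFunctorAdd D k (-s)).app W).inv) ≫ ((shiftFunctorAdd D k (-s)).app W).hom := by
    simp
  rw [this, h2, zero_comp]

lemma noHoms_of_isZero_src {X W : D} (h : IsZero X) : NoHoms D X W :=
  fun _ f => h.eq_of_src f 0

lemma noHoms_of_isZero_tgt {X W : D} (h : IsZero W) : NoHoms D X W :=
  fun k f => (((shiftFunctor D k).map_isZero h).eq_of_tgt f 0)

/-- Covariant degreewise two-out-of-three for vanishing along a distinguished triangle. -/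
lemma van_cov₂ {W : D} (T : Triangle D) (hT : T ∈ distTriang D) (k : ℤ)
    (h1 : ∀ f : W ⟶ T.obj₁⟦k⟧, f = 0) (h3 : ∀ f : W ⟶ T.obj₃⟦k⟧, f = 0) :
    ∀ f : W ⟶ T.obj₂⟦k⟧, f = 0 := by
  intro f
  have hT' := Triangle.shift_distinguished T hT k
  obtain ⟨g, hg⟩ := Triangle.coyoneda_exact₂ _ hT' f (h3 _)
  rw [hg, h1 g]; exact zero_comp

/-- Contravariant two-out-of-three for vanishing along a distinguished triangle. -/
lemma van_con₂ {W : D} (T : Triangle D) (hT : T ∈ distTriang D)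
    (h1 : ∀ f : T.obj₁ ⟶ W, f = 0) (h3 : ∀ f : T.obj₃ ⟶ W, f = 0) :
    ∀ f : T.obj₂ ⟶ W, f = 0 := by
  intro f
  obtain ⟨g, hg⟩ := Triangle.yoneda_exact₂ T hT f (h1 _)
  rw [hg, h3 g, comp_zero]

lemma noHoms_cov₂ {W : D} (T : Triangle D) (hT : T ∈ distTriang D)
    (h1 : NoHoms D W T.obj₁) (h3 : NoHoms D W T.obj₃) : NoHoms D W T.obj₂ :=
  fun k => van_cov₂ T hT k (h1 k) (h3 k)

lemma noHoms_con₂ {W : D} (T : Triangle D) (hT : T ∈ distTriang D)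
    (h1 : NoHoms D T.obj₁ W) (h3 : NoHoms D T.obj₃ W) : NoHoms D T.obj₂ W :=
  fun k => van_con₂ T hT (h1 k) (h3 k)

lemma noHoms_right_of_gen {S : Set D} {W X : D} (h : ∀ s ∈ S, NoHoms D W s)
    (hX : genTriang D S X) : NoHoms D W X := by
  induction hX with
  | of X hX => exact h X hX
  | isZero X hX => exact noHoms_of_isZero_tgt hX
  | iso e hX ih => exact noHoms_iso_tgt e ih
  | shift X n hX ih => exact noHoms_shift_tgt ih n
  | ext₂ T hT h₁ h₃ ih₁ ih₃ => exact noHoms_cov₂ T hT ih₁ ih₃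

lemma noHoms_left_of_gen {S : Set D} {W X : D} (h : ∀ s ∈ S, NoHoms D s W)
    (hX : genTriang D S X) : NoHoms D X W := by
  induction hX with
  | of X hX => exact h X hX
  | isZero X hX => exact noHoms_of_isZero_src hX
  | iso e hX ih => exact noHoms_iso_src e ih
  | shift X n hX ih => exact noHoms_shift_src ih n
  | ext₂ T hT h₁ h₃ ih₁ ih₃ => exact noHoms_con₂ T hT ih₁ ih₃

lemma noHoms_gen_singleton_right {e W X : D} (h : NoHoms D W e)
    (hX : genTriang D {e} X) : NoHoms D W X :=
  noHoms_right_of_gen (fun s hs => by rw [Set.eq_of_mem_singleton hs]; exact h) hX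

lemma noHoms_gen_singleton_left {e W X : D} (h : NoHoms D e W)
    (hX : genTriang D {e} X) : NoHoms D X W :=
  noHoms_left_of_gen (fun s hs => by rw [Set.eq_of_mem_singleton hs]; exact h) hX

lemma genTriang_trans {S S' : Set D} {X : D} (hX : genTriang D S' X)
    (h : ∀ s ∈ S', genTriang D S s) : genTriang D S X := by
  induction hX with
  | of X hX => exact h X hX
  | isZero X hX => exact genTriang.isZero X hX
  | iso e _ ih => exact genTriang.iso e ih
  | shift X n _ ih => exact genTriang.shift X n ih
  | ext₂ T hT _ _ ih₁ ih₃ => exact genTriang.ext₂ T hT ih₁ ih₃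

/-! ### Lemmas about iterated left mutations -/

lemma iter_append {a b : List D} {X Y : D} (h : IterLeftMut D (a ++ b) X Y) :
    ∃ Z, IterLeftMut D b X Z ∧ IterLeftMut D a Z Y := by
  induction a generalizing Y with
  | nil => exact ⟨Y, h, ⟨Iso.refl Y⟩⟩
  | cons e a ih =>
    obtain ⟨Z, hZ, hstep⟩ := h
    obtain ⟨Z', hb, ha⟩ := ih hZ
    exact ⟨Z', hb, ⟨Z, ha, hstep⟩⟩

lemma iter_cov_down {l : List D} {X Y W : D} (h : IterLeftMut D l X Y)
    (hl : ∀ V ∈ l, NoHoms D W V) (hX : NoHoms D W X) : NoHoms D W Y := by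
  induction l generalizing Y with
  | nil => obtain ⟨e⟩ := h; exact noHoms_iso_tgt e hX
  | cons E0 t ih =>
    obtain ⟨Z, hZ, _, _, A, f, g, hmor, hA, hT⟩ := h
    have hWZ := ih hZ (fun V hV => hl V (List.mem_cons_of_mem _ hV))
    have hWA : NoHoms D W A :=
      noHoms_gen_singleton_right (hl E0 List.mem_cons_self) hA
    exact noHoms_cov₂ _ (rot_of_distTriang _ hT) hWZ (noHoms_shift_tgt hWA 1)

lemma iter_cov_up {l : List D} {X Y W : D} (h : IterLeftMut D l X Y)
    (hl : ∀ V ∈ l, NoHoms D W V) (hY : NoHoms D W Y) : NoHoms D W X := by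
  induction l generalizing Y with
  | nil => obtain ⟨e⟩ := h; exact noHoms_iso_tgt e.symm hY
  | cons E0 t ih =>
    obtain ⟨Z, hZ, _, _, A, f, g, hmor, hA, hT⟩ := h
    have hWA : NoHoms D W A :=
      noHoms_gen_singleton_right (hl E0 List.mem_cons_self) hA
    have hWZ : NoHoms D W Z := noHoms_cov₂ _ hT hWA hY
    exact ih hZ (fun V hV => hl V (List.mem_cons_of_mem _ hV)) hWZ

lemma iter_van_cov_down {l : List D} {X Y W : D} (k : ℤ) (h : IterLeftMut D l X Y)
    (hl : ∀ V ∈ l, NoHoms D W V) (hX : ∀ f : W ⟶ X⟦k⟧, f = 0) :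
    ∀ f : W ⟶ Y⟦k⟧, f = 0 := by
  induction l generalizing Y with
  | nil => obtain ⟨e⟩ := h; exact van_iso_tgt ((shiftFunctor D k).mapIso e) hX
  | cons E0 t ih =>
    obtain ⟨Z, hZ, _, _, A, f, g, hmor, hA, hT⟩ := h
    have hWZ := ih hZ (fun V hV => hl V (List.mem_cons_of_mem _ hV))
    have hWA : NoHoms D W A :=
      noHoms_gen_singleton_right (hl E0 List.mem_cons_self) hA
    exact van_cov₂ _ (rot_of_distTriang _ hT) k hWZ ((noHoms_shift_tgt hWA 1) k)

lemma iter_van_con_up {l : List D} {X Y W : D} (k : ℤ) (h : IterLeftMut D l X Y)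
    (hl : ∀ V ∈ l, NoHoms D V W) (hY : ∀ f : Y ⟶ W⟦k⟧, f = 0) :
    ∀ f : X ⟶ W⟦k⟧, f = 0 := by
  induction l generalizing Y with
  | nil => obtain ⟨e⟩ := h; exact van_iso_src e.symm hY
  | cons E0 t ih =>
    obtain ⟨Z, hZ, _, _, A, f, g, hmor, hA, hT⟩ := h
    have hWA : NoHoms D A W :=
      noHoms_gen_singleton_left (hl E0 List.mem_cons_self) hA
    have hWZ : ∀ f : Z ⟶ W⟦k⟧, f = 0 := van_con₂ _ hT (hWA k) hY
    exact ih hZ (fun V hV => hl V (List.mem_cons_of_mem _ hV)) hWZ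

lemma iter_con_down {l : List D} {X Y W : D} (h : IterLeftMut D l X Y)
    (hl : ∀ V ∈ l, NoHoms D V W) (hX : NoHoms D X W) : NoHoms D Y W := by
  induction l generalizing Y with
  | nil => obtain ⟨e⟩ := h; exact noHoms_iso_src e hX
  | cons E0 t ih =>
    obtain ⟨Z, hZ, _, _, A, f, g, hmor, hA, hT⟩ := h
    have hWZ := ih hZ (fun V hV => hl V (List.mem_cons_of_mem _ hV))
    have hWA : NoHoms D A W :=
      noHoms_gen_singleton_left (hl E0 List.mem_cons_self) hA
    exact noHoms_con₂ _ (rot_of_distTriang _ hT) hWZ (noHoms_shift_src hWA 1)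

lemma iter_orth {l : List D} {X Y : D} (h : IterLeftMut D l X Y)
    (hp : l.Pairwise (fun U V => NoHoms D V U)) : ∀ W ∈ l, NoHoms D W Y := by
  induction l generalizing Y with
  | nil => intro W hW; exact absurd hW List.not_mem_nil
  | cons E0 t ih =>
    obtain ⟨Z, hZ, hlm⟩ := h
    obtain ⟨hhead, htail⟩ := List.pairwise_cons.mp hp
    intro W hW
    rcases List.mem_cons.mp hW with rfl | hWt
    · exact hlm.2.1 W rfl
    · obtain ⟨_, _, A, f, g, hmor, hA, hT⟩ := hlm
      have hWZ := ih hZ htail W hWt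
      have hWA : NoHoms D W A := noHoms_gen_singleton_right (hhead W hWt) hA
      exact noHoms_cov₂ _ (rot_of_distTriang _ hT) hWZ (noHoms_shift_tgt hWA 1)

lemma iter_gen {l : List D} {X Y : D} {S : Set D} (h : IterLeftMut D l X Y)
    (hX : genTriang D S X) (hl : ∀ V ∈ l, genTriang D S V) : genTriang D S Y := by
  induction l generalizing Y with
  | nil => obtain ⟨e⟩ := h; exact genTriang.iso e hX
  | cons E0 t ih =>
    obtain ⟨Z, hZ, _, _, A, f, g, hmor, hA, hT⟩ := h
    have hZ' := ih hZ (fun V hV => hl V (List.mem_cons_of_mem _ hV))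
    have hA' : genTriang D S A := genTriang_trans hA
      (fun s hs => by rw [Set.eq_of_mem_singleton hs]; exact hl E0 List.mem_cons_self)
    exact genTriang.ext₂ _ (rot_of_distTriang _ hT) hZ' (genTriang.shift A 1 hA')

lemma iter_nonzero {l : List D} {X Y W : D} (h : IterLeftMut D l X Y)
    (hl : ∀ V ∈ l, NoHoms D W V) (hX : ∃ g : W ⟶ X, g ≠ 0) : ∃ g : W ⟶ Y, g ≠ 0 := by
  induction l generalizing Y with
  | nil =>
    obtain ⟨e⟩ := h
    obtain ⟨g, hg⟩ := hX
    refine ⟨g ≫ e.hom, fun h0 => hg ?_⟩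
    have : g = (g ≫ e.hom) ≫ e.inv := by simp
    rw [this, h0, zero_comp]
  | cons E0 t ih =>
    obtain ⟨Z, hZ, _, _, A, f, g0, hmor, hA, hT⟩ := h
    obtain ⟨w, hw⟩ := ih hZ (fun V hV => hl V (List.mem_cons_of_mem _ hV))
    refine ⟨w ≫ g0, fun h0 => ?_⟩
    obtain ⟨u, hu⟩ := Triangle.coyoneda_exact₂ _ hT w h0
    have hu0 : u = 0 := noHoms_hom_zero
      (noHoms_gen_singleton_right (hl E0 List.mem_cons_self) hA) u
    exact hw (by rw [hu, hu0]; exact zero_comp)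

/-! ### Finite-dimensionality helpers -/

lemma fd_hom (hft : FiniteType D) (X Y : D) : FiniteDimensional ℂ (X ⟶ Y) := by
  have h := (hft X Y).1 0
  let e : (X ⟶ Y⟦(0 : ℤ)⟧) ≃ₗ[ℂ] (X ⟶ Y) :=
    { toFun := fun f => f ≫ (shiftFunctorZero D ℤ).hom.app Y
      map_add' := fun f g => by rw [Preadditive.add_comp]
      map_smul' := fun r f => by dsimp; rw [Linear.smul_comp]
      invFun := fun f => f ≫ (shiftFunctorZero D ℤ).inv.app Y
      left_inv := fun f => by simp
      right_inv := fun f => by simp }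
  exact Module.Finite.equiv e

lemma id_ne_zero_of_finrank_one {X : D} (h : Module.finrank ℂ (X ⟶ X) = 1) :
    (𝟙 X : X ⟶ X) ≠ 0 := by
  intro h0
  have hall : ∀ w : X ⟶ X, w = 0 := fun w => by rw [← Category.comp_id w, h0, comp_zero]
  have hsub : Subsingleton (X ⟶ X) := ⟨fun a b => by rw [hall a, hall b]⟩
  rw [Module.finrank_zero_of_subsingleton] at h
  exact one_ne_zero h.symm

/-! ### The key cone-induction lemma -/

lemma key_zero {E A : D} (hft : FiniteType D)
    (hfr : Module.finrank ℂ (E ⟶ A) = 0) : ∀ f : E ⟶ A, f = 0 := by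
  haveI := fd_hom hft E A
  intro f
  haveI : Subsingleton (E ⟶ A) := Module.finrank_zero_iff.mp hfr
  exact Subsingleton.elim f 0

lemma key_main (hft : FiniteType D) (E F : D)
    (hE0 : ∀ k : ℤ, k ≠ 0 → ∀ f : E ⟶ E⟦k⟧, f = 0)
    (hE1 : Module.finrank ℂ (E ⟶ E) = 1)
    (hEF : ∀ f : E⟦(1 : ℤ)⟧ ⟶ F, f = 0)
    (hu : ∃ u : E ⟶ F, u ≠ 0) :
    ∀ (d : ℕ) (A : D), genTriang D {E} A → Module.finrank ℂ (E ⟶ A) ≤ d →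
      (∀ k : ℤ, k ≠ 0 → ∀ f : E ⟶ A⟦k⟧, f = 0) →
      (∀ f : A ⟶ F, f = 0) → ∀ f : E ⟶ A, f = 0 := by
  have hid : (𝟙 E : E ⟶ E) ≠ 0 := id_ne_zero_of_finrank_one hE1
  have hscal : ∀ w : E ⟶ E, ∃ c : ℂ, c • 𝟙 E = w :=
    (finrank_eq_one_iff_of_nonzero' (𝟙 E) hid).mp hE1
  intro d
  induction d with
  | zero =>
    intro A hgen hfr ha hb
    exact key_zero hft (Nat.le_zero.mp hfr)
  | succ d ih =>
    intro A hgen hfr ha hb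
    by_cases hd : Module.finrank ℂ (E ⟶ A) ≤ d
    · exact ih A hgen hd ha hb
    · exfalso
      haveI := fd_hom hft E A
      have hpos : 0 < Module.finrank ℂ (E ⟶ A) := by omega
      haveI : Nontrivial (E ⟶ A) := Module.finrank_pos_iff.mp hpos
      obtain ⟨f, hf⟩ := exists_ne (0 : E ⟶ A)
      obtain ⟨Cf, q, h3, hT⟩ := Pretriangulated.distinguished_cocone_triangle f
      -- the cone is generated by `E`
      have hgenC : genTriang D {E} Cf :=
        genTriang.ext₂ _ (rot_of_distTriang _ hT) hgen
          (genTriang.shift E 1 (genTriang.of E rfl))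
      -- graded homs from `E` to the cone vanish in nonzero degrees
      have haC : ∀ k : ℤ, k ≠ 0 → ∀ g : E ⟶ Cf⟦k⟧, g = 0 := by
        intro k hk g
        by_cases hk1 : k = -1
        · subst hk1
          set η := shiftFunctorCompIsoId D 1 (-1) (by norm_num) with hη
          have hz : h3 ≫ f⟦(1 : ℤ)⟧' = 0 := comp_distTriang_mor_zero₃₁ _ hT
          have hnat : η.hom.app E ≫ f = (f⟦(1 : ℤ)⟧')⟦(-1 : ℤ)⟧' ≫ η.hom.app A := by
            have := η.hom.naturality f
            simpa using this.symm
          have hv : (g ≫ (h3⟦(-1 : ℤ)⟧' ≫ η.hom.app E)) ≫ f = 0 := by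
            rw [Category.assoc, Category.assoc, hnat, ← Category.assoc (h3⟦(-1 : ℤ)⟧'),
              ← Functor.map_comp, hz, Functor.map_zero]
            simp
          obtain ⟨c, hc⟩ := hscal (g ≫ (h3⟦(-1 : ℤ)⟧' ≫ η.hom.app E))
          have hc0 : c = 0 := by
            have h2 : c • f = 0 := by
              rw [← Category.id_comp f, ← Linear.smul_comp, hc]
              exact hv
            exact (smul_eq_zero.mp h2).resolve_right hf
          have hv0 : g ≫ (h3⟦(-1 : ℤ)⟧' ≫ η.hom.app E) = 0 := by
            rw [← hc, hc0, zero_smul]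
          have hgh : g ≫ h3⟦(-1 : ℤ)⟧' = 0 := by
            have h4 : g ≫ h3⟦(-1 : ℤ)⟧' =
                (g ≫ (h3⟦(-1 : ℤ)⟧' ≫ η.hom.app E)) ≫ η.inv.app E := by
              simp
            rw [h4, hv0, zero_comp]
          have hT' := Triangle.shift_distinguished _ (rot_of_distTriang _ hT) (-1)
          have hside : g ≫ ((-1 : ℤ).negOnePow • (h3⟦(-1 : ℤ)⟧')) = 0 := by
            rw [Linear.comp_units_smul, hgh, smul_zero]
          obtain ⟨w, hw⟩ := Triangle.coyoneda_exact₂ _ hT' g hside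
          rw [hw, ha (-1) (by norm_num) w]; exact zero_comp
        · -- `k ∉ {-1, 0}`
          have h3' : ∀ v : E ⟶ (E⟦(1 : ℤ)⟧)⟦k⟧, v = 0 := by
            refine van_shift_tgt_add 1 k ?_
            intro v
            exact hE0 (1 + k) (by omega) v
          exact van_cov₂ _ (rot_of_distTriang _ hT) k (ha k hk) h3' g
      -- homs from the cone to `F` vanish
      have hbC : ∀ g : Cf ⟶ F, g = 0 := van_con₂ _ (rot_of_distTriang _ hT) hb hEF
      -- the rank drops by one
      have hsur : Function.Surjective (Linear.rightComp ℂ E q : (E ⟶ A) →ₗ[ℂ] (E ⟶ Cf)) := by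
        intro g
        obtain ⟨w, hw⟩ := Triangle.coyoneda_exact₃ _ hT g (hE0 1 one_ne_zero (g ≫ h3))
        exact ⟨w, hw.symm⟩
      have hker : LinearMap.ker (Linear.rightComp ℂ E q : (E ⟶ A) →ₗ[ℂ] (E ⟶ Cf)) =
          Submodule.span ℂ {f} := by
        ext w
        simp only [LinearMap.mem_ker, Linear.rightComp_apply, Submodule.mem_span_singleton]
        constructor
        · intro hw
          obtain ⟨w', hw'⟩ := Triangle.coyoneda_exact₂ _ hT w hw
          obtain ⟨c, hc⟩ := hscal w'
          refine ⟨c, ?_⟩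
          rw [hw', ← hc]
          show c • f = (c • 𝟙 E) ≫ f
          rw [Linear.smul_comp, Category.id_comp]
        · rintro ⟨c, rfl⟩
          have hz : f ≫ q = 0 := comp_distTriang_mor_zero₁₂ _ hT
          rw [Linear.smul_comp, hz, smul_zero]
      have hfrC : Module.finrank ℂ (E ⟶ Cf) ≤ d := by
        have h1 := LinearMap.finrank_range_add_finrank_ker
          (Linear.rightComp ℂ E q : (E ⟶ A) →ₗ[ℂ] (E ⟶ Cf))
        rw [LinearMap.range_eq_top.mpr hsur, finrank_top, hker,
          finrank_span_singleton hf] at h1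
        omega
      have hvC : ∀ g : E ⟶ Cf, g = 0 := ih Cf hgenC hfrC haC hbC
      have hNoEC : NoHoms D E Cf := noHoms_mk hvC haC
      have hCC : NoHoms D Cf Cf := noHoms_gen_singleton_left hNoEC hgenC
      have hCzero : IsZero Cf := (IsZero.iff_id_eq_zero Cf).mpr (noHoms_hom_zero hCC (𝟙 Cf))
      obtain ⟨u, hu⟩ := hu
      have hzsrc : IsZero ((Cf)⟦(-1 : ℤ)⟧) := (shiftFunctor D (-1 : ℤ)).map_isZero hCzero
      obtain ⟨g, hg⟩ := Triangle.yoneda_exact₂ _ (inv_rot_of_distTriang _ hT) u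
        (hzsrc.eq_of_src _ _)
      exact hu (by rw [hg, hb g]; exact comp_zero)

end Aux

section Main

variable {C}

/-- The dual object `F i` lies in the triangulated subcategory generated by `E 0, …, E i`. -/
lemma genF (n : ℕ) (E F : ℕ → C)
    (hdual : ∀ j < n, IterLeftMut C ((List.range j).map E) (E j) (F j))
    (i : ℕ) (hi : i < n) : genTriang C {X : C | ∃ l, l ≤ i ∧ X = E l} (F i) := by
  refine iter_gen (hdual i hi) (genTriang.of _ ⟨i, le_refl i, rfl⟩) ?_
  intro V hV
  simp only [List.mem_map, List.mem_range] at hV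
  obtain ⟨l, hl, rfl⟩ := hV
  exact genTriang.of _ ⟨l, le_of_lt hl, rfl⟩

/-- `Hom^•(E k, F i) = 0` for `k ≠ i`. -/
lemma noHoms_E_F (n : ℕ) (E F : ℕ → C) (hE : ExcCollection C n E)
    (hdual : ∀ j < n, IterLeftMut C ((List.range j).map E) (E j) (F j))
    (i k : ℕ) (hi : i < n) (hk : k < n) (hne : k ≠ i) : NoHoms C (E k) (F i) := by
  rcases lt_or_gt_of_ne hne with h | h
  · refine iter_orth (hdual i hi) ?_ (E k) ?_
    · refine List.Pairwise.map E (fun a b hab => hab) ?_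
      refine (List.pairwise_lt_range (n := i)).imp_of_mem ?_
      intro a b _ hb hab
      exact hE.2 a b hab (lt_trans (List.mem_range.mp hb) hi)
    · exact List.mem_map.mpr ⟨k, List.mem_range.mpr h, rfl⟩
  · refine noHoms_right_of_gen ?_ (genF n E F hdual i hi)
    intro s hs
    obtain ⟨l, hl, rfl⟩ := hs
    exact hE.2 l k (lt_of_le_of_lt hl h) hk

/-- `Hom^k(E i, F i) = 0` for `k ≠ 0`. -/
lemma van_E_F (n : ℕ) (E F : ℕ → C) (hE : ExcCollection C n E)
    (hdual : ∀ j < n, IterLeftMut C ((List.range j).map E) (E j) (F j))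
    (i : ℕ) (hi : i < n) (k : ℤ) (hk : k ≠ 0) : ∀ f : E i ⟶ (F i)⟦k⟧, f = 0 := by
  refine iter_van_cov_down k (hdual i hi) ?_ ((hE.1 i hi).1 k hk)
  intro V hV
  simp only [List.mem_map, List.mem_range] at hV
  obtain ⟨l, hl, rfl⟩ := hV
  exact hE.2 l i hl hi

/-- There is a nonzero map `E i ⟶ F i`. -/
lemma exists_nonzero_E_F (n : ℕ) (E F : ℕ → C) (hE : ExcCollection C n E)
    (hdual : ∀ j < n, IterLeftMut C ((List.range j).map E) (E j) (F j))
    (i : ℕ) (hi : i < n) : ∃ u : E i ⟶ F i, u ≠ 0 := by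
  refine iter_nonzero (hdual i hi) ?_ ⟨𝟙 (E i), id_ne_zero_of_finrank_one (hE.1 i hi).2⟩
  intro V hV
  simp only [List.mem_map, List.mem_range] at hV
  obtain ⟨l, hl, rfl⟩ := hV
  exact hE.2 l i hl hi

/-- `Hom^•(F i, F j) = 0` for `i < j`. -/
lemma noHoms_F_F (n : ℕ) (E F : ℕ → C) (hE : ExcCollection C n E)
    (hdual : ∀ j < n, IterLeftMut C ((List.range j).map E) (E j) (F j))
    (i j : ℕ) (hij : i < j) (hj : j < n) : NoHoms C (F i) (F j) := by
  refine noHoms_left_of_gen ?_ (genF n E F hdual i (lt_trans hij hj))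
  intro s hs
  obtain ⟨l, hl, rfl⟩ := hs
  exact noHoms_E_F n E F hE hdual j l hj (lt_trans (lt_of_le_of_lt hl hij) hj)
    (by omega)

/-- The core induction on the gap `j - i`. -/
lemma core (hft : FiniteType C) (n : ℕ) (E F : ℕ → C)
    (hE : ExcCollection C n E)
    (hstrong : ∀ i < n, ∀ j < n, ∀ k : ℤ, k ≠ 0 → ∀ f : E i ⟶ (E j)⟦k⟧, f = 0)
    (hdual : ∀ j < n, IterLeftMut C ((List.range j).map E) (E j) (F j))
    (φ : ℕ → ℤ) (hlev : ∀ i j, i ≤ j → j < n → φ i ≤ φ j) (m : ℤ)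
    (htilt : ∀ i < n, ∀ j < n, φ i = m →
      (i ≤ j → PRelated C F i j (φ j - m)) ∧ (j ≤ i → PRelated C F j i (m - φ j))) :
    ∀ d : ℕ, ∀ i j, i < j → j < n → φ i = m → φ j = m → j - i ≤ d →
      NoHoms C (E i) (E j) ∧ NoHoms C (F j) (F i) := by
  intro d
  induction d with
  | zero => intro i j hij hj _ _ hd; exact absurd hd (by omega)
  | succ d ih =>
    intro i j hij hj hφi hφj hd
    have hi : i < n := lt_trans hij hj
    have hmid : ∀ l, i < l → l < j → NoHoms C (E i) (E l) := by
      intro l h1 h2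
      have hl : l < n := lt_trans h2 hj
      have hφl : φ l = m :=
        le_antisymm (by rw [← hφj]; exact hlev l j h2.le hj)
          (by rw [← hφi]; exact hlev i l h1.le hl)
      exact (ih i l h1 hl hφi hφl (by omega)).1
    -- decompose the mutation chain of `F j` at position `i`
    have hch := hdual j hj
    have hlist : (List.range j).map E =
        (((List.range i).map E ++ [E i]) ++
          (List.range (j - (i + 1))).map (fun x => E ((i + 1) + x))) := by
      conv_lhs => rw [show j = (i + 1) + (j - (i + 1)) from by omega]
      rw [List.range_add, List.map_append, List.map_map, List.range_succ, List.map_append]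
      rfl
    rw [hlist] at hch
    obtain ⟨Zb, hchain2, hrest⟩ := iter_append hch
    obtain ⟨Za, hstep, hchain1⟩ := iter_append hrest
    obtain ⟨Zc, hbc, hmut⟩ := hstep
    obtain ⟨ebc⟩ := hbc
    obtain ⟨_, _, A, fA, gA, hA3, hAgen, hAT⟩ := hmut
    -- membership facts
    have hmem1 : ∀ V ∈ (List.range i).map E, ∃ l, l < i ∧ V = E l := by
      intro V hV
      simp only [List.mem_map, List.mem_range] at hV
      obtain ⟨l, hl, rfl⟩ := hV
      exact ⟨l, hl, rfl⟩
    have hmem2 : ∀ V ∈ (List.range (j - (i + 1))).map (fun x => E ((i + 1) + x)),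
        ∃ l, i < l ∧ l < j ∧ V = E l := by
      intro V hV
      simp only [List.mem_map, List.mem_range] at hV
      obtain ⟨x, hx, rfl⟩ := hV
      exact ⟨(i + 1) + x, by omega, by omega, rfl⟩
    -- hypotheses for the chains
    have hl1cov : ∀ V ∈ (List.range i).map E, NoHoms C (E i) V := by
      intro V hV
      obtain ⟨l, hl, rfl⟩ := hmem1 V hV
      exact hE.2 l i hl hi
    have hl1con : ∀ V ∈ (List.range i).map E, NoHoms C V (F i) := by
      intro V hV
      obtain ⟨l, hl, rfl⟩ := hmem1 V hV
      exact noHoms_E_F n E F hE hdual i l hi (lt_trans hl hi) (by omega)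
    have hl2cov : ∀ V ∈ (List.range (j - (i + 1))).map (fun x => E ((i + 1) + x)),
        NoHoms C (E i) V := by
      intro V hV
      obtain ⟨l, h1, h2, rfl⟩ := hmem2 V hV
      exact hmid l h1 h2
    have hl2con : ∀ V ∈ (List.range (j - (i + 1))).map (fun x => E ((i + 1) + x)),
        NoHoms C V (F i) := by
      intro V hV
      obtain ⟨l, h1, h2, rfl⟩ := hmem2 V hV
      exact noHoms_E_F n E F hE hdual i l hi (lt_trans h2 hj) (by omega)
    -- basic facts about `Za`, `Zb`, `Zc`
    have hZa_cov : NoHoms C (E i) Za :=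
      iter_cov_up hchain1 hl1cov (noHoms_E_F n E F hE hdual j i hj hi (by omega))
    have htiltF : ∀ k : ℤ, k ≠ 0 → ∀ f : F j ⟶ (F i)⟦k⟧, f = 0 := by
      intro k hk f
      refine ((htilt i hi j hj hφi).1 (le_of_lt hij)) k ?_ f
      rw [hφj, sub_self]
      exact hk
    have hZaF : ∀ k : ℤ, k ≠ 0 → ∀ f : Za ⟶ (F i)⟦k⟧, f = 0 := by
      intro k hk
      exact iter_van_con_up k hchain1 hl1con (htiltF k hk)
    have hZbF : NoHoms C Zb (F i) :=
      iter_con_down hchain2 hl2con (noHoms_E_F n E F hE hdual i j hi hj (by omega))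
    have hZcF : NoHoms C Zc (F i) := noHoms_iso_src ebc hZbF
    have hZb_deg : ∀ k : ℤ, k ≠ 0 → ∀ f : E i ⟶ Zb⟦k⟧, f = 0 := by
      intro k hk
      exact iter_van_cov_down k hchain2 hl2cov (hstrong i hi j hj k hk)
    have hZc_deg : ∀ k : ℤ, k ≠ 0 → ∀ f : E i ⟶ Zc⟦k⟧, f = 0 := by
      intro k hk
      exact van_iso_tgt ((shiftFunctor C k).mapIso ebc) (hZb_deg k hk)
    -- properties of the mutation triangle `A ⟶ Zc ⟶ Za ⟶ A⟦1⟧`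
    have ha : ∀ k : ℤ, k ≠ 0 → ∀ f : E i ⟶ A⟦k⟧, f = 0 := by
      intro k hk
      exact van_cov₂ (Triangle.mk fA gA hA3).invRotate (inv_rot_of_distTriang _ hAT) k
        ((noHoms_shift_tgt hZa_cov (-1)) k) (hZc_deg k hk)
    have hb0 : ∀ f : A ⟶ F i, f = 0 := by
      refine van_con₂ (Triangle.mk fA gA hA3).invRotate (inv_rot_of_distTriang _ hAT) ?_
        (noHoms_hom_zero hZcF)
      exact van_shift_cancel (-1) 1 (by norm_num) (hZaF 1 one_ne_zero)
    -- apply the key lemma : `A ≅ 0`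
    have hexc := hE.1 i hi
    have hEF1 : ∀ f : (E i)⟦(1 : ℤ)⟧ ⟶ F i, f = 0 :=
      van_shift_cancel 1 (-1) (by norm_num)
        (van_E_F n E F hE hdual i hi (-1) (by norm_num))
    have hEA : ∀ f : E i ⟶ A, f = 0 :=
      key_main hft (E i) (F i) hexc.1 hexc.2 hEF1
        (exists_nonzero_E_F n E F hE hdual i hi)
        (Module.finrank ℂ (E i ⟶ A)) A hAgen (le_refl _) ha hb0
    have hNoEA : NoHoms C (E i) A := noHoms_mk hEA ha
    have hAA : NoHoms C A A := noHoms_gen_singleton_left hNoEA hAgen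
    have hAzero : IsZero A := (IsZero.iff_id_eq_zero A).mpr (noHoms_hom_zero hAA (𝟙 A))
    -- conclude
    have hZcCov : NoHoms C (E i) Zc := noHoms_cov₂ _ hAT hNoEA hZa_cov
    have hZbCov : NoHoms C (E i) Zb := noHoms_iso_tgt ebc.symm hZcCov
    have hEiEj : NoHoms C (E i) (E j) := iter_cov_up hchain2 hl2cov hZbCov
    have hZaCon : NoHoms C Za (F i) :=
      noHoms_con₂ _ (rot_of_distTriang _ hAT) hZcF
        (noHoms_shift_src (noHoms_of_isZero_src hAzero) 1)
    have hFjFi : NoHoms C (F j) (F i) := iter_con_down hchain1 hl1con hZaCon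
    exact ⟨hEiEj, hFjFi⟩

end Main

/-- Let `𝔼` be a full strong exceptional collection with dual collection
`𝔽`, and let `φ` be a levelling that is tilting at level `m`.  Then any two distinct objects
`E i, E j` with `φ i = φ j = m` are orthogonal, and moreover `F i` and `F j` are orthogonal. -/
theorem tilting_level_orthogonal (hft : FiniteType C) (n : ℕ) (E F : ℕ → C)
    (hE : ExcCollection C n E)
    (hstrong : ∀ i < n, ∀ j < n, ∀ k : ℤ, k ≠ 0 → ∀ f : E i ⟶ (E j)⟦k⟧, f = 0)
    (hfull : ∀ X : C, genTriang C (collSet C n E) X)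
    (hdual : ∀ j < n, IterLeftMut C ((List.range j).map E) (E j) (F j))
    (φ : ℕ → ℤ) (hlev : ∀ i j, i ≤ j → j < n → φ i ≤ φ j) (m : ℤ)
    (htilt : ∀ i < n, ∀ j < n, φ i = m →
      (i ≤ j → PRelated C F i j (φ j - m)) ∧ (j ≤ i → PRelated C F j i (m - φ j)))
    (i j : ℕ) (hi : i < n) (hj : j < n) (hij : i ≠ j)
    (hφi : φ i = m) (hφj : φ j = m) :
    (NoHoms C (E i) (E j) ∧ NoHoms C (E j) (E i)) ∧
      (NoHoms C (F i) (F j) ∧ NoHoms C (F j) (F i)) := by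
  rcases lt_or_gt_of_ne hij with h | h
  · have hcore := core hft n E F hE hstrong hdual φ hlev m htilt j i j h hj hφi hφj (by omega)
    exact ⟨⟨hcore.1, hE.2 i j h hj⟩, ⟨noHoms_F_F n E F hE hdual i j h hj, hcore.2⟩⟩
  · have hcore := core hft n E F hE hstrong hdual φ hlev m htilt i j i h hi hφj hφi (by omega)
    exact ⟨⟨hE.2 j i h hi, hcore.1⟩, ⟨hcore.2, noHoms_F_F n E F hE hdual j i h hi⟩⟩
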